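/- For any subset K of V₀, the intersection of Λ_K with the interior of the simplex Δ_S is homeomorphic (in fact diffeomorphic via the exp/log maps) to the orthogonal complement of the linear span of K inside V₀; in particular it is homeomorphic to an open disk of dimension |S| - 1 - dim(span K). -/

import Mathlib

open scoped BigOperators

noncomputable section

/-- The simplex of probability distributions on `S`. -/
def Delta (S : Type*) [Fintype S] : Set (S → ℝ) :=
  {μ | (∀ s, 0 ≤ μ s) ∧ ∑ s, μ s = 1}

/-- The (relative) interior of the simplex: strictly positive distributions. -/
def intDelta (S : Type*) [Fintype S] : Set (S → ℝ) :=
  {μ | (∀ s, 0 < μ s) ∧ ∑ s, μ s = 1}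

/-- The hyperplane of vectors with coordinate sum zero. -/
def V0 (S : Type*) [Fintype S] : Set (S → ℝ) :=
  {v | ∑ s, v s = 0}

/-- The set `λ_κ` of distributions satisfying the centrality equation of `κ`
(real powers, `rpow`, so `0 ^ x = 0` for `x > 0`). -/
def lam {S : Type*} [Fintype S] (κ : S → ℝ) : Set (S → ℝ) :=
  {μ ∈ Delta S |
    ∏ s ∈ Finset.univ.filter (fun s => 0 < κ s), (μ s) ^ (κ s) =
    ∏ s ∈ Finset.univ.filter (fun s => κ s < 0), (μ s) ^ (-(κ s))}

/-- `Λ_K`, the intersection of the `λ_κ` over `κ ∈ K`. -/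
def Lam {S : Type*} [Fintype S] (K : Set (S → ℝ)) : Set (S → ℝ) :=
  ⋂ κ ∈ K, lam κ


section Aux

variable {S : Type*} [Fintype S] [Nonempty S]

def smax (v : S → ℝ) (s : S) : ℝ := Real.exp (v s) / ∑ t, Real.exp (v t)

def lgc (μ : S → ℝ) (s : S) : ℝ :=
  Real.log (μ s) - (∑ t, Real.log (μ t)) / Fintype.card S

lemma sum_exp_pos (v : S → ℝ) : 0 < ∑ t, Real.exp (v t) :=
  Finset.sum_pos (fun t _ => Real.exp_pos _) Finset.univ_nonempty

lemma smax_pos (v : S → ℝ) (s : S) : 0 < smax v s :=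
  div_pos (Real.exp_pos _) (sum_exp_pos v)

lemma sum_smax (v : S → ℝ) : ∑ s, smax v s = 1 := by
  simp [smax, ← Finset.sum_div, div_self (sum_exp_pos v).ne']

lemma log_smax (v : S → ℝ) (s : S) :
    Real.log (smax v s) = v s - Real.log (∑ t, Real.exp (v t)) := by
  rw [smax, Real.log_div (Real.exp_pos _).ne' (sum_exp_pos v).ne', Real.log_exp]

lemma smax_lgc {μ : S → ℝ} (hμ : ∀ s, 0 < μ s) (hsum : ∑ s, μ s = 1) :
    smax (lgc μ) = μ := by
  funext s
  have h1 : ∀ t, Real.exp (lgc μ t)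
      = μ t * Real.exp (-((∑ t, Real.log (μ t)) / Fintype.card S)) := by
    intro t
    rw [lgc, sub_eq_add_neg, Real.exp_add, Real.exp_log (hμ t)]
  have h2 : ∑ t, Real.exp (lgc μ t)
      = Real.exp (-((∑ t, Real.log (μ t)) / Fintype.card S)) := by
    simp only [h1, ← Finset.sum_mul, hsum, one_mul]
  rw [smax, h1, h2, mul_div_assoc, div_self (Real.exp_pos _).ne', mul_one]

lemma lgc_smax {v : S → ℝ} (hv : ∑ s, v s = 0) : lgc (smax v) = v := by
  have hcard : (0:ℝ) < Fintype.card S := by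
    exact_mod_cast Fintype.card_pos
  funext s
  rw [lgc]
  simp only [log_smax]
  rw [Finset.sum_sub_distrib, hv, Finset.sum_const, Finset.card_univ, zero_sub,
    nsmul_eq_mul]
  field_simp; ring

/-- The key characterization of membership in `lam κ` for strictly positive `μ`. -/
lemma mem_lam_iff (κ : S → ℝ) {μ : S → ℝ} (hμ : ∀ s, 0 < μ s) (hsum : ∑ s, μ s = 1) :
    μ ∈ lam κ ↔ ∑ s, κ s * Real.log (μ s) = 0 := by
  have hDelta : μ ∈ Delta S := ⟨fun s => (hμ s).le, hsum⟩
  have hA : (0:ℝ) < ∏ s ∈ Finset.univ.filter (fun s => 0 < κ s), (μ s) ^ (κ s) :=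
    Finset.prod_pos fun s _ => Real.rpow_pos_of_pos (hμ s) _
  have hB : (0:ℝ) < ∏ s ∈ Finset.univ.filter (fun s => κ s < 0), (μ s) ^ (-(κ s)) :=
    Finset.prod_pos fun s _ => Real.rpow_pos_of_pos (hμ s) _
  have hlogA : Real.log (∏ s ∈ Finset.univ.filter (fun s => 0 < κ s), (μ s) ^ (κ s))
      = ∑ s ∈ Finset.univ.filter (fun s => 0 < κ s), κ s * Real.log (μ s) := by
    rw [Real.log_prod (fun s _ => (Real.rpow_pos_of_pos (hμ s) _).ne')]
    exact Finset.sum_congr rfl fun s _ => Real.log_rpow (hμ s) _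
  have hlogB : Real.log (∏ s ∈ Finset.univ.filter (fun s => κ s < 0), (μ s) ^ (-(κ s)))
      = ∑ s ∈ Finset.univ.filter (fun s => κ s < 0), (-(κ s)) * Real.log (μ s) := by
    rw [Real.log_prod (fun s _ => (Real.rpow_pos_of_pos (hμ s) _).ne')]
    exact Finset.sum_congr rfl fun s _ => Real.log_rpow (hμ s) _
  have hsplit : ∑ s, κ s * Real.log (μ s)
      = ∑ s ∈ Finset.univ.filter (fun s => 0 < κ s), κ s * Real.log (μ s)
        - ∑ s ∈ Finset.univ.filter (fun s => κ s < 0), (-(κ s)) * Real.log (μ s) := by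
    rw [← Finset.sum_filter_add_sum_filter_not Finset.univ (fun s => 0 < κ s)
      (fun s => κ s * Real.log (μ s))]
    have hsub : Finset.univ.filter (fun s => κ s < 0)
        ⊆ Finset.univ.filter (fun s => ¬ 0 < κ s) := by
      intro s hs
      simp only [Finset.mem_filter, Finset.mem_univ, true_and] at hs ⊢
      linarith
    have : ∑ s ∈ Finset.univ.filter (fun s => ¬ 0 < κ s), κ s * Real.log (μ s)
        = ∑ s ∈ Finset.univ.filter (fun s => κ s < 0), κ s * Real.log (μ s) := by
      refine (Finset.sum_subset hsub fun s hs hns => ?_).symm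
      simp only [Finset.mem_filter, Finset.mem_univ, true_and] at hs hns
      have : κ s = 0 := by push_neg at hs hns; linarith
      simp [this]
    rw [this]
    rw [Finset.sum_congr rfl (fun s _ => by ring :
      ∀ s ∈ Finset.univ.filter (fun s => κ s < 0),
        (-(κ s)) * Real.log (μ s) = -(κ s * Real.log (μ s)))]
    rw [Finset.sum_neg_distrib]
    ring
  constructor
  · rintro ⟨-, h⟩
    rw [hsplit, ← hlogA, ← hlogB, h, sub_self]
  · intro h
    refine ⟨hDelta, ?_⟩
    have : Real.log (∏ s ∈ Finset.univ.filter (fun s => 0 < κ s), (μ s) ^ (κ s))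
        = Real.log (∏ s ∈ Finset.univ.filter (fun s => κ s < 0), (μ s) ^ (-(κ s))) := by
      rw [hlogA, hlogB]
      rw [hsplit] at h
      linarith
    exact Real.log_injOn_pos (Set.mem_Ioi.2 hA) (Set.mem_Ioi.2 hB) this

end Aux


section Main

variable {S : Type*} [Fintype S] [Nonempty S]

lemma sum_lgc (μ : S → ℝ) : ∑ s, lgc μ s = 0 := by
  have hcard : (0:ℝ) < Fintype.card S := by exact_mod_cast Fintype.card_pos
  simp only [lgc]
  rw [Finset.sum_sub_distrib, Finset.sum_const, Finset.card_univ, nsmul_eq_mul]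
  field_simp
  ring

lemma sum_mul_lgc {κ : S → ℝ} (hκ : ∑ s, κ s = 0) (μ : S → ℝ) :
    ∑ s, κ s * lgc μ s = ∑ s, κ s * Real.log (μ s) := by
  simp only [lgc, mul_sub]
  rw [Finset.sum_sub_distrib, ← Finset.sum_mul, hκ, zero_mul, sub_zero]

lemma sum_mul_log_smax {κ : S → ℝ} (hκ : ∑ s, κ s = 0) {v : S → ℝ}
    (hv : ∑ s, κ s * v s = 0) : ∑ s, κ s * Real.log (smax v s) = 0 := by
  simp only [log_smax, mul_sub]
  rw [Finset.sum_sub_distrib, hv, ← Finset.sum_mul, hκ]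
  ring

/-- Part 1: the log/softmax homeomorphism. -/
def logHomeo (K : Set (S → ℝ)) (hK : K ⊆ V0 S) :
    ↥(Lam K ∩ intDelta S) ≃ₜ
      ↥{v : S → ℝ | v ∈ V0 S ∧ ∀ κ ∈ K, ∑ s, κ s * v s = 0} where
  toFun μ := ⟨lgc μ.1, by
    refine ⟨sum_lgc μ.1, fun κ hκ => ?_⟩
    have hμΛ : μ.1 ∈ lam κ := Set.mem_iInter₂.mp μ.2.1 κ hκ
    have hμ := μ.2.2
    rw [sum_mul_lgc (hK hκ) μ.1]
    exact (mem_lam_iff κ hμ.1 hμ.2).mp hμΛ⟩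
  invFun v := ⟨smax v.1, by
    refine ⟨Set.mem_iInter₂.mpr fun κ hκ => ?_, smax_pos v.1, sum_smax v.1⟩
    exact (mem_lam_iff κ (smax_pos v.1) (sum_smax v.1)).mpr
      (sum_mul_log_smax (hK hκ) (v.2.2 κ hκ))⟩
  left_inv μ := Subtype.ext (smax_lgc μ.2.2.1 μ.2.2.2)
  right_inv v := Subtype.ext (lgc_smax v.2.1)
  continuous_toFun := by
    have hlog : ∀ s : S, Continuous fun μ : ↥(Lam K ∩ intDelta S) =>
        Real.log (μ.1 s) := fun s =>
      Continuous.log ((continuous_apply s).comp continuous_subtype_val)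
        (fun μ => (μ.2.2.1 s).ne')
    refine Continuous.subtype_mk (continuous_pi fun s => ?_) _
    exact (hlog s).sub
      ((continuous_finset_sum _ fun t _ => hlog t).div_const _)
  continuous_invFun := by
    have hc : Continuous (smax : (S → ℝ) → (S → ℝ)) :=
      continuous_pi fun s =>
        Continuous.div (Real.continuous_exp.comp (continuous_apply s))
          (continuous_finset_sum _ fun t _ => Real.continuous_exp.comp (continuous_apply t))
          (fun v => (sum_exp_pos v).ne')
    exact Continuous.subtype_mk (hc.comp continuous_subtype_val) _

lemma mem_span_orthogonal {E : Type*} [NormedAddCommGroup E] [InnerProductSpace ℝ E]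
    (K : Set E) (x : E) :
    x ∈ (Submodule.span ℝ K)ᗮ ↔ ∀ κ ∈ K, (inner ℝ κ x : ℝ) = 0 := by
  constructor
  · intro h κ hκ
    exact (Submodule.mem_orthogonal _ x).mp h κ (Submodule.subset_span hκ)
  · intro h
    rw [Submodule.mem_orthogonal]
    intro w hw
    induction hw using Submodule.span_induction with
    | mem y hy => exact h y hy
    | zero => simp
    | add y z _ _ hy hz => rw [inner_add_left, hy, hz, add_zero]
    | smul c y _ hy => rw [inner_smul_left, hy, mul_zero]

end Main

theorem LamK_inter_intDelta_homeo (S : Type*) [Fintype S] [Nonempty S]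
    (K : Set (S → ℝ)) (hK : K ⊆ V0 S) :
    Nonempty (↥(Lam K ∩ intDelta S) ≃ₜ
      ↥{v : S → ℝ | v ∈ V0 S ∧ ∀ κ ∈ K, ∑ s, κ s * v s = 0}) ∧
    Nonempty (↥(Lam K ∩ intDelta S) ≃ₜ
      ↥(Metric.ball (0 : EuclideanSpace ℝ
          (Fin (Fintype.card S - 1 - Module.finrank ℝ (Submodule.span ℝ K)))) 1)) := by
  classical
  have h1 := logHomeo K hK
  refine ⟨⟨h1⟩, ?_⟩
  let u : EuclideanSpace ℝ S := WithLp.toLp 2 (fun _ => 1)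
  have hu : u ≠ 0 := by
    intro h
    have h2 : u (Classical.arbitrary S) = (0 : EuclideanSpace ℝ S) (Classical.arbitrary S) := by rw [h]
    have h0 : (0 : EuclideanSpace ℝ S) (Classical.arbitrary S) = 0 := rfl
    rw [h0] at h2
    exact one_ne_zero h2
  have hinner : ∀ x y : EuclideanSpace ℝ S, (inner ℝ x y : ℝ) = ∑ s, x s * y s := by
    intro x y
    rw [PiLp.inner_apply]
    simp [RCLike.inner_apply, starRingEnd_apply]
    exact Finset.sum_congr rfl fun s _ => mul_comm _ _
  let U : Submodule ℝ (EuclideanSpace ℝ S) := Submodule.span ℝ {u}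
  let T : Submodule ℝ (EuclideanSpace ℝ S) := Submodule.span ℝ (WithLp.toLp 2 '' K)
  have hmemU : ∀ v : EuclideanSpace ℝ S, v ∈ Uᗮ ↔ ∑ s, v s = 0 := by
    intro v
    rw [Submodule.mem_orthogonal_singleton_iff_inner_left, hinner]
    simp [u]
  have hTle : T ≤ Uᗮ := Submodule.span_le.2 (Set.image_subset_iff.2 fun κ hκ => (hmemU _).2 (hK hκ))
  let W : Submodule ℝ (EuclideanSpace ℝ S) := Uᗮ ⊓ Tᗮ
  have hWset : (W : Set (EuclideanSpace ℝ S))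
      = WithLp.ofLp ⁻¹' {v : S → ℝ | v ∈ V0 S ∧ ∀ κ ∈ K, ∑ s, κ s * v s = 0} := by
    ext v
    rw [Set.mem_preimage, SetLike.mem_coe, Submodule.mem_inf, hmemU, mem_span_orthogonal,
      Set.forall_mem_image]
    constructor
    · rintro ⟨hv0, hvK⟩
      exact ⟨hv0, fun κ hκ => by have := hvK hκ; rw [hinner] at this; exact this⟩
    · rintro ⟨hv0, hvK⟩
      exact ⟨hv0, fun κ hκ => by rw [hinner]; exact hvK κ hκ⟩
  have hUT : U ⊓ T = ⊥ :=
    le_bot_iff.mp ((inf_le_inf_left U hTle).trans (Submodule.orthogonal_disjoint U).le_bot)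
  have hrankU : Module.finrank ℝ U = 1 := finrank_span_singleton hu
  have hsum1 := Submodule.finrank_sup_add_finrank_inf_eq U T
  rw [hUT, finrank_bot, add_zero, hrankU] at hsum1
  have hsum2 := Submodule.finrank_add_finrank_orthogonal (𝕜 := ℝ) (U ⊔ T)
  rw [finrank_euclideanSpace] at hsum2
  have hWorth : W = (U ⊔ T)ᗮ := Submodule.inf_orthogonal U T
  have hT' : Module.finrank ℝ (Submodule.span ℝ K) = Module.finrank ℝ T := by
    have hTm : T = (Submodule.span ℝ K).map
        ((PiLp.continuousLinearEquiv 2 ℝ (fun _ : S => ℝ)).symm.toLinearEquiv : (S → ℝ) →ₗ[ℝ] EuclideanSpace ℝ S) := by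
      rw [Submodule.map_span]; rfl
    rw [hTm, LinearEquiv.finrank_map_eq]
  have hrankW : Module.finrank ℝ W
      = Fintype.card S - 1 - Module.finrank ℝ (Submodule.span ℝ K) := by
    rw [hWorth, hT']
    omega
  let e1 : ↥{v : S → ℝ | v ∈ V0 S ∧ ∀ κ ∈ K, ∑ s, κ s * v s = 0} ≃ₜ ↥(W : Set (EuclideanSpace ℝ S)) :=
    ((PiLp.continuousLinearEquiv 2 ℝ (fun _ : S => ℝ)).toHomeomorph.subtype
        (p := fun w => w ∈ W) (fun w => by rw [← SetLike.mem_coe, hWset]; exact Iff.rfl)).symm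
  let e2 : ↥W ≃ₜ EuclideanSpace ℝ
      (Fin (Fintype.card S - 1 - Module.finrank ℝ (Submodule.span ℝ K))) :=
    (LinearEquiv.toContinuousLinearEquiv
      (LinearEquiv.ofFinrankEq _ _
        (by rw [hrankW, finrank_euclideanSpace, Fintype.card_fin]))).toHomeomorph
  exact ⟨h1.trans ((e1.trans e2).trans (Homeomorph.unitBall))⟩
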